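/- There exist two DAGs G₁ and G₂ on the same finite vertex set that are Markov equivalent (same skeleton and same v-structures) and satisfy mvc(C(G₁)) = 2 · mvc(C(G₂)); concretely, on vertices {a,b,c,d} the DAGs G₁ with arcs b→a, c→a, c→b, c→d and G₂ with arcs b→a, c→a, b→c, c→d are Markov equivalent with mvc(C(G₁)) = 2 and mvc(C(G₂)) = 1. Hence the factor 2 in the bound mvc(C(G)) ≤ 2·mvc(C(G')) for Markov-equivalent DAGs is tight. -/
import Mathlib


/-- A directed graph (given by its edge relation) is a DAG if it has no directed cycles. -/
def IsDAG {V : Type*} (E : V → V → Prop) : Prop :=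
  ∀ v : V, ¬ Relation.TransGen E v v

/-- The set of parents of `v` in the directed graph `E`. -/
def parents {V : Type*} (E : V → V → Prop) (v : V) : Set V := {u | E u v}

/-- An arc `x → y` of `E` is a covered edge if `Pa(x) = Pa(y) \ {x}`. -/
def CoveredEdge {V : Type*} (E : V → V → Prop) (x y : V) : Prop :=
  E x y ∧ parents E x = parents E y \ {x}

/-- The set of covered edges of `E`, as ordered pairs. -/
def coveredEdges {V : Type*} (E : V → V → Prop) : Set (V × V) :=
  {p | CoveredEdge E p.1 p.2}

/-- The skeleton (undirected adjacency) of a directed graph. -/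
def Skel {V : Type*} (E : V → V → Prop) (u v : V) : Prop := E u v ∨ E v u

/-- `(u, v, w)` is a v-structure: `u → v ← w` with `u ≠ w` non-adjacent. -/
def VStruct {V : Type*} (E : V → V → Prop) (u v w : V) : Prop :=
  u ≠ w ∧ E u v ∧ E w v ∧ ¬ Skel E u w

/-- Two directed graphs are Markov equivalent: same skeleton and same v-structures. -/
def MarkovEquiv {V : Type*} (E E' : V → V → Prop) : Prop :=
  (∀ u v, Skel E u v ↔ Skel E' u v) ∧ (∀ u v w, VStruct E u v w ↔ VStruct E' u v w)

/-- Minimum vertex cover number of a set of (directed) edges. -/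
noncomputable def mvc {V : Type*} [Fintype V] (F : Set (V × V)) : ℕ :=
  sInf {n | ∃ S : Finset V, (∀ p ∈ F, p.1 ∈ S ∨ p.2 ∈ S) ∧ S.card = n}

/-- The graph obtained from `E` by reversing the arc `x → y` to `y → x`. -/
def reverseEdge {V : Type*} (E : V → V → Prop) (x y : V) : V → V → Prop :=
  fun u v => (E u v ∧ ¬(u = x ∧ v = y)) ∨ (u = y ∧ v = x)

/-- A moral DAG is a DAG with no v-structures. -/
def Moral {V : Type*} (E : V → V → Prop) : Prop := ∀ u v w, ¬ VStruct E u v w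

/-- `w` is a direct child of `v`: `v → w` is an arc and there is no directed
path from `v` to `w` of length at least 2 (i.e. through an intermediate vertex). -/
def DirectChild {V : Type*} (E : V → V → Prop) (v w : V) : Prop :=
  E v w ∧ ∀ z : V, ¬ (Relation.TransGen E v z ∧ Relation.TransGen E z w)


/-- The DAG on vertices `{a, b, c, d} = {0, 1, 2, 3}` with arcs `b → a`, `c → a`,
`c → b`, `c → d`. -/
def G₁ : Fin 4 → Fin 4 → Prop := fun u v =>
  (u = 1 ∧ v = 0) ∨ (u = 2 ∧ v = 0) ∨ (u = 2 ∧ v = 1) ∨ (u = 2 ∧ v = 3)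

/-- The DAG on vertices `{a, b, c, d} = {0, 1, 2, 3}` with arcs `b → a`, `c → a`,
`b → c`, `c → d`. -/
def G₂ : Fin 4 → Fin 4 → Prop := fun u v =>
  (u = 1 ∧ v = 0) ∨ (u = 2 ∧ v = 0) ∨ (u = 1 ∧ v = 2) ∨ (u = 2 ∧ v = 3)

lemma isDAG_of_rank {V : Type*} (E : V → V → Prop) (f : V → ℕ)
    (h : ∀ u v, E u v → f v < f u) : IsDAG E := by
  intro v hv
  have key : ∀ w, Relation.TransGen E v w → f w < f v := by
    intro w hw
    induction hw with
    | single h' => exact h _ _ h'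
    | tail _ h' ih => exact lt_trans (h _ _ h') ih
  exact lt_irrefl _ (key v hv)

lemma cov1 : coveredEdges G₁ = {((1 : Fin 4), (0 : Fin 4)), (2, 1), (2, 3)} := by
  ext ⟨x, y⟩
  simp only [coveredEdges, Set.mem_setOf_eq, CoveredEdge, parents, G₁, Set.ext_iff,
    Set.mem_setOf_eq, Set.mem_diff, Set.mem_singleton_iff, Set.mem_insert_iff,
    Prod.mk.injEq]
  revert x y
  decide

lemma cov2 : coveredEdges G₂ = {((2 : Fin 4), (0 : Fin 4)), (1, 2)} := by
  ext ⟨x, y⟩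
  simp only [coveredEdges, Set.mem_setOf_eq, CoveredEdge, parents, G₂, Set.ext_iff,
    Set.mem_setOf_eq, Set.mem_diff, Set.mem_singleton_iff, Set.mem_insert_iff,
    Prod.mk.injEq]
  revert x y
  decide

set_option synthInstance.maxSize 4000 in
lemma noVS1 : ∀ u v w : Fin 4, ¬ VStruct G₁ u v w := by
  simp only [VStruct, Skel, G₁]; decide

set_option synthInstance.maxSize 4000 in
lemma noVS2 : ∀ u v w : Fin 4, ¬ VStruct G₂ u v w := by
  simp only [VStruct, Skel, G₂]; decide

lemma mvc1 : mvc (coveredEdges G₁) = 2 := by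
  rw [cov1]
  apply le_antisymm
  · apply Nat.sInf_le
    refine ⟨{1, 2}, ?_, by decide⟩
    intro p hp
    simp only [Set.mem_insert_iff, Set.mem_singleton_iff] at hp
    rcases hp with h | h | h <;> subst h <;> decide
  · apply le_csInf
    · refine ⟨2, {1, 2}, ?_, by decide⟩
      intro p hp
      simp only [Set.mem_insert_iff, Set.mem_singleton_iff] at hp
      rcases hp with h | h | h <;> subst h <;> decide
    · rintro n ⟨S, hS, rfl⟩
      have h1 := hS (1, 0) (by simp)
      have h2 := hS (2, 3) (by simp)
      rw [show (2 : ℕ) = 1 + 1 by rfl, Nat.add_one_le_iff, Finset.one_lt_card]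
      rcases h1 with h1 | h1 <;> rcases h2 with h2 | h2 <;>
        exact ⟨_, h1, _, h2, by decide⟩

lemma mvc2 : mvc (coveredEdges G₂) = 1 := by
  rw [cov2]
  apply le_antisymm
  · apply Nat.sInf_le
    refine ⟨{2}, ?_, by decide⟩
    intro p hp
    simp only [Set.mem_insert_iff, Set.mem_singleton_iff] at hp
    rcases hp with h | h <;> subst h <;> decide
  · apply le_csInf
    · refine ⟨1, {2}, ?_, by decide⟩
      intro p hp
      simp only [Set.mem_insert_iff, Set.mem_singleton_iff] at hp
      rcases hp with h | h <;> subst h <;> decide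
    · rintro n ⟨S, hS, rfl⟩
      have h1 := hS (2, 0) (by simp)
      rw [Nat.one_le_iff_ne_zero, Ne, Finset.card_eq_zero]
      rintro rfl
      rcases h1 with h1 | h1 <;> simp at h1

/-- `G₁` and `G₂` are Markov-equivalent DAGs with `mvc (C(G₁)) = 2` and
`mvc (C(G₂)) = 1`, so `mvc (C(G₁)) = 2 * mvc (C(G₂))`: the factor 2 in the
bound `mvc (C(G)) ≤ 2 * mvc (C(G'))` for Markov-equivalent DAGs is tight. -/
theorem tightness_of_two_approx :
    IsDAG G₁ ∧ IsDAG G₂ ∧ MarkovEquiv G₁ G₂ ∧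
    mvc (coveredEdges G₁) = 2 ∧ mvc (coveredEdges G₂) = 1 ∧
    mvc (coveredEdges G₁) = 2 * mvc (coveredEdges G₂) := by
  refine ⟨?_, ?_, ?_, mvc1, mvc2, by rw [mvc1, mvc2]⟩
  · exact isDAG_of_rank G₁ (fun v => if v = 2 then 3 else if v = 1 then 1 else 0)
      (by simp only [G₁]; decide)
  · exact isDAG_of_rank G₂ (fun v => if v = 1 then 3 else if v = 2 then 2 else 0)
      (by simp only [G₂]; decide)
  · constructor
    · intro u v
      simp only [Skel, G₁, G₂]
      revert u v
      decide
    · intro u v w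
      exact iff_of_false (noVS1 u v w) (noVS2 u v w)
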